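/- Every tree T with diameter at least 3 admits a self-isomorphic graph anti-homomorphism: there exists a bijection σ : V(T) → V(T) such that for every edge uv ∈ E(T), the pair σ(u)σ(v) is not an edge of T; consequently the graph on V(T) with edge set E(T) ∪ {σ(u)σ(v) : uv ∈ E(T)} has exactly 2|E(T)| edges. -/

import Mathlib

namespace SelfAnti

set_option maxHeartbeats 3200000


open SimpleGraph Equiv

variable {V : Type*} {T : SimpleGraph V}

lemma exists_spath (hc : T.Connected) (x y : V) :
    ∃ p : T.Walk x y, p.IsPath ∧ p.length = T.dist x y := by
  obtain ⟨p, hp⟩ := (hc x y).exists_walk_length_eq_dist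
  exact ⟨p, p.isPath_of_length_eq_dist hp, hp⟩

lemma dist_le_of_mem_support {r s z : V} {p : T.Walk r s} (h : z ∈ p.support) :
    T.dist r z ≤ p.length := by
  classical
  exact le_trans (SimpleGraph.dist_le (p.takeUntil z h)) (p.length_takeUntil_le h)

lemma isPath_concat {r x y : V} {p : T.Walk r x} (hp : p.IsPath) (h : T.Adj x y)
    (hy : y ∉ p.support) : (p.concat h).IsPath := by
  rw [← SimpleGraph.Walk.isPath_reverse_iff, SimpleGraph.Walk.reverse_concat]
  rw [SimpleGraph.Walk.cons_isPath_iff]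
  exact ⟨hp.reverse, by simpa using hy⟩

/-- In a tree, adjacent vertices are at different distances from any root. -/
lemma adj_dist_ne (hT : T.IsTree) (r : V) {x y : V} (h : T.Adj x y) :
    T.dist r x ≠ T.dist r y := by
  classical
  intro heq
  obtain ⟨p, hp, hl⟩ := exists_spath hT.isConnected r x
  by_cases hy : y ∈ p.support
  · have h1 : T.dist r y ≤ (p.takeUntil y hy).length := SimpleGraph.dist_le _
    have h3 := p.take_spec hy
    have hlen : (p.takeUntil y hy).length + (p.dropUntil y hy).length = p.length := by
      rw [← SimpleGraph.Walk.length_append, h3]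
    have h0 : (p.dropUntil y hy).length = 0 := by
      have := p.length_takeUntil_le hy
      omega
    have : y = x := SimpleGraph.Walk.eq_of_length_eq_zero h0
    subst this
    exact T.irrefl h
  · have hP2 : (p.concat h).IsPath := isPath_concat hp h hy
    obtain ⟨q, hq, hql⟩ := exists_spath hT.isConnected r y
    have huniq := hT.IsAcyclic.path_unique ⟨p.concat h, hP2⟩ ⟨q, hq⟩
    have := congrArg (fun w : T.Path r y => w.1.length) huniq
    simp only [SimpleGraph.Walk.length_concat] at this
    omega

/-- In a tree, adjacency changes the distance from a root by exactly one. -/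
lemma adj_dist (hT : T.IsTree) (r : V) {x y : V} (h : T.Adj x y) :
    T.dist r y = T.dist r x + 1 ∨ T.dist r x = T.dist r y + 1 := by
  have h1 : T.dist r y ≤ T.dist r x + 1 := by
    have := hT.isConnected.dist_triangle (u := r) (v := x) (w := y)
    have hxy : T.dist x y = 1 := SimpleGraph.dist_eq_one_iff_adj.mpr h
    omega
  have h2 : T.dist r x ≤ T.dist r y + 1 := by
    have := hT.isConnected.dist_triangle (u := r) (v := y) (w := x)
    have hxy : T.dist y x = 1 := SimpleGraph.dist_eq_one_iff_adj.mpr h.symm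
    omega
  have h3 := adj_dist_ne hT r h
  omega

lemma exists_parent (hT : T.IsTree) (r : V) {x : V} (hx : x ≠ r) :
    ∃ p : V, T.Adj x p ∧ T.dist r p + 1 = T.dist r x := by
  obtain ⟨p, hp, hl⟩ := exists_spath hT.isConnected r x
  have hd0 : T.dist r x ≠ 0 := fun hh => hx ((hT.isConnected.dist_eq_zero_iff).mp hh).symm
  obtain ⟨c, hadj, q, hq⟩ := SimpleGraph.Walk.exists_eq_cons_of_ne hx p.reverse
  refine ⟨c, hadj, ?_⟩
  have h1 : T.dist r c ≤ q.reverse.length := SimpleGraph.dist_le _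
  have h2 : q.length + 1 = p.length := by
    have := congrArg SimpleGraph.Walk.length hq
    simp only [SimpleGraph.Walk.length_reverse, SimpleGraph.Walk.length_cons] at this
    omega
  have h3 : T.dist r x ≤ T.dist r c + 1 := by
    have := hT.isConnected.dist_triangle (u := r) (v := c) (w := x)
    have hcx : T.dist c x = 1 := SimpleGraph.dist_eq_one_iff_adj.mpr hadj.symm
    omega
  simp only [SimpleGraph.Walk.length_reverse] at h1
  omega

lemma parent_unique (hT : T.IsTree) (r : V) {x p₁ p₂ : V}
    (h1 : T.Adj x p₁) (hd1 : T.dist r p₁ + 1 = T.dist r x)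
    (h2 : T.Adj x p₂) (hd2 : T.dist r p₂ + 1 = T.dist r x) : p₁ = p₂ := by
  obtain ⟨q1, hq1, hl1⟩ := exists_spath hT.isConnected r p₁
  obtain ⟨q2, hq2, hl2⟩ := exists_spath hT.isConnected r p₂
  have hx1 : x ∉ q1.support := by
    intro hmem
    have := dist_le_of_mem_support hmem
    omega
  have hx2 : x ∉ q2.support := by
    intro hmem
    have := dist_le_of_mem_support hmem
    omega
  have hP1 : (q1.concat h1.symm).IsPath := isPath_concat hq1 h1.symm hx1
  have hP2 : (q2.concat h2.symm).IsPath := isPath_concat hq2 h2.symm hx2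
  have huniq := hT.IsAcyclic.path_unique ⟨q1.concat h1.symm, hP1⟩ ⟨q2.concat h2.symm, hP2⟩
  have hw : q1.concat h1.symm = q2.concat h2.symm := congrArg Subtype.val huniq
  have hrev := congrArg SimpleGraph.Walk.reverse hw
  rw [SimpleGraph.Walk.reverse_concat, SimpleGraph.Walk.reverse_concat] at hrev
  have := congrArg (fun w : T.Walk x r => w.getVert 1) hrev
  simpa [SimpleGraph.Walk.getVert_cons_succ] using this

lemma three_le_dist (hT : T.IsTree) {x y : V} (hne : x ≠ y) (hnadj : ¬ T.Adj x y)
    (hcom : ∀ z, T.Adj x z → ¬ T.Adj z y) : 3 ≤ T.dist x y := by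
  have h0 : T.dist x y ≠ 0 := fun hh => hne (hT.isConnected.dist_eq_zero_iff.mp hh)
  have h1 : T.dist x y ≠ 1 := fun hh => hnadj (SimpleGraph.dist_eq_one_iff_adj.mp hh)
  have h2 : T.dist x y ≠ 2 := by
    intro hd
    obtain ⟨p, hp, hl⟩ := exists_spath hT.isConnected x y
    have ha1 : T.Adj (p.getVert 0) (p.getVert 1) := p.adj_getVert_succ (by omega)
    have ha2 : T.Adj (p.getVert 1) (p.getVert 2) := p.adj_getVert_succ (by omega)
    rw [SimpleGraph.Walk.getVert_zero] at ha1
    have hgl : p.getVert 2 = y := by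
      have := p.getVert_length
      rwa [hl, hd] at this
    rw [hgl] at ha2
    exact hcom _ ha1 ha2
  omega

lemma dist3_decomp (hT : T.IsTree) {x y : V} (h : T.dist x y = 3) :
    ∃ z1 z2, T.Adj x z1 ∧ T.Adj z1 z2 ∧ T.Adj z2 y := by
  obtain ⟨p, hp, hl⟩ := exists_spath hT.isConnected x y
  refine ⟨p.getVert 1, p.getVert 2, ?_, ?_, ?_⟩
  · have := p.adj_getVert_succ (i := 0) (by omega)
    simpa using this
  · exact p.adj_getVert_succ (by omega)
  · have h23 := p.adj_getVert_succ (i := 2) (by omega)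
    have h3 : p.getVert 3 = y := by
      have hh := p.getVert_length
      rwa [hl, h] at hh
    rwa [h3] at h23



open SimpleGraph Equiv

variable {V : Type*} {T : SimpleGraph V}

/-- Paths between vertices distinct from a pendant vertex avoid that pendant vertex. -/
lemma walk_avoid {u w : V} (hleaf : ∀ y, T.Adj u y → y = w) :
    ∀ {a b : V} (p : T.Walk a b), p.IsPath → a ≠ u → b ≠ u → u ∉ p.support := by
  intro a b p
  induction p with
  | nil =>
    intro _ ha _
    simp only [SimpleGraph.Walk.support_nil, List.mem_singleton]
    exact fun h => ha h.symm
  | @cons a c b h q ih =>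
    intro hp ha hb
    by_cases hc : c = u
    · exfalso
      subst hc
      have haw : a = w := hleaf a h.symm
      obtain ⟨z, hz, q2, hq2⟩ := SimpleGraph.Walk.exists_eq_cons_of_ne (Ne.symm hb) q
      have hzw : z = w := hleaf z hz
      have hmem : a ∈ q.support := by
        rw [hq2, SimpleGraph.Walk.support_cons]
        right
        rw [haw, ← hzw]
        exact q2.start_mem_support
      rw [SimpleGraph.Walk.cons_isPath_iff] at hp
      exact hp.2 hmem
    · have hq := ih hp.of_cons hc hb
      rw [SimpleGraph.Walk.support_cons]
      intro hmem
      rcases List.mem_cons.mp hmem with h1 | h2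
      · exact ha h1.symm
      · exact hq h2

lemma reach_induce {s : Set V} :
    ∀ {a b : V} (p : T.Walk a b) (hp : ∀ z ∈ p.support, z ∈ s) (ha : a ∈ s) (hb : b ∈ s),
    (T.induce s).Reachable ⟨a, ha⟩ ⟨b, hb⟩ := by
  intro a b p
  induction p with
  | nil => intro _ _ _; exact Reachable.refl _
  | @cons a c b h q ih =>
    intro hp ha hb
    have hc : c ∈ s := hp c (by rw [SimpleGraph.Walk.support_cons]; right; exact q.start_mem_support)
    have h1 : (T.induce s).Adj ⟨a, ha⟩ ⟨c, hc⟩ := h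
    exact h1.reachable.trans (ih (fun z hz => hp z (by rw [SimpleGraph.Walk.support_cons]; right; exact hz)) hc hb)

/-- Deleting a pendant vertex of a tree yields a tree. -/
lemma delete_leaf_isTree (hT : T.IsTree) {u w : V} (huw : T.Adj u w)
    (hleaf : ∀ y, T.Adj u y → y = w) :
    (T.induce {v | v ≠ u}).IsTree := by
  constructor
  · rw [connected_iff]
    constructor
    · rintro ⟨a, ha⟩ ⟨b, hb⟩
      obtain ⟨p, hp, -⟩ := exists_spath hT.isConnected a b
      have havoid := walk_avoid hleaf p hp ha hb
      refine reach_induce p (fun z hz => ?_) ha hb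
      intro hzu
      exact havoid (by rwa [hzu] at hz)
    · exact ⟨⟨w, fun hwu => T.irrefl (hwu ▸ huw)⟩⟩
  · apply SimpleGraph.isAcyclic_of_path_unique
    intro v w' p q
    let f := (SimpleGraph.Embedding.induce (G := T) {v | v ≠ u})
    have hp' : (p.1.map f.toHom).IsPath :=
      SimpleGraph.Walk.map_isPath_of_injective f.injective p.2
    have hq' : (q.1.map f.toHom).IsPath :=
      SimpleGraph.Walk.map_isPath_of_injective f.injective q.2
    have huniq := hT.IsAcyclic.path_unique ⟨p.1.map f.toHom, hp'⟩ ⟨q.1.map f.toHom, hq'⟩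
    have := congrArg Subtype.val huniq
    simp only at this
    have := SimpleGraph.Walk.map_injective_of_injective f.injective _ _ this
    exact Subtype.ext this

/-- Distances in an induced subgraph are at least distances in the whole graph. -/
lemma induce_dist_le {s : Set V} (hc : (T.induce s).Connected) (a b : ↥s) :
    T.dist ↑a ↑b ≤ (T.induce s).dist a b := by
  obtain ⟨p, hp⟩ := (hc a b).exists_walk_length_eq_dist
  calc T.dist ↑a ↑b ≤ (p.map (SimpleGraph.Embedding.induce (G := T) s).toHom).length :=
        SimpleGraph.dist_le _
  _ = (T.induce s).dist a b := by rw [SimpleGraph.Walk.length_map, hp]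



open SimpleGraph Equiv

variable {V : Type*}

lemma exists_cyc [Fintype V] [DecidableEq V] (s : Finset V) (hs : 2 ≤ s.card) :
    ∃ ρ : Equiv.Perm V, (∀ x ∈ s, ρ x ∈ s ∧ ρ x ≠ x) ∧ ∀ x ∉ s, ρ x = x := by
  obtain ⟨f, hf, hsupp⟩ := s.exists_cycleOn
  have hnt : (s : Set V).Nontrivial := by
    obtain ⟨a, ha, b, hb, hab⟩ := Finset.one_lt_card.mp hs
    exact ⟨a, by exact_mod_cast ha, b, by exact_mod_cast hb, hab⟩
  refine ⟨f, fun x hx => ⟨?_, ?_⟩, fun x hx => ?_⟩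
  · have := hf.1.mapsTo (show x ∈ (s : Set V) by exact_mod_cast hx)
    exact_mod_cast this
  · exact hf.apply_ne hnt (by exact_mod_cast hx)
  · by_contra hne
    exact hx (hsupp (Equiv.Perm.mem_support.mpr hne))

lemma exists_cycle_through [Fintype V] [DecidableEq V] (S : Finset V) (e s₀ : V)
    (he : e ∉ S) (hs₀ : s₀ ∈ S) :
    ∃ ρ : Equiv.Perm V, (∀ x ∈ insert e S, ρ x ∈ insert e S ∧ ρ x ≠ x) ∧
      (∀ x ∉ insert e S, ρ x = x) ∧ ρ s₀ = e := by
  have hcard : 2 ≤ (insert e S).card := by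
    rw [Finset.card_insert_of_notMem he]
    have := Finset.card_pos.mpr ⟨s₀, hs₀⟩
    omega
  obtain ⟨f, hf, hfix⟩ := exists_cyc (insert e S) hcard
  set c := Equiv.swap (f s₀) e with hc
  have hs₀Y : s₀ ∈ insert e S := Finset.mem_insert_of_mem hs₀
  have heY : e ∈ insert e S := Finset.mem_insert_self e S
  have hfs₀Y : f s₀ ∈ insert e S := (hf s₀ hs₀Y).1
  have hcY : ∀ x, x ∈ insert e S → c x ∈ insert e S := by
    intro x hx
    rcases eq_or_ne x (f s₀) with rfl | h1
    · rw [hc, Equiv.swap_apply_left]; exact heY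
    rcases eq_or_ne x e with rfl | h2
    · rw [hc, Equiv.swap_apply_right]; exact hfs₀Y
    · rw [hc, Equiv.swap_apply_of_ne_of_ne h1 h2]; exact hx
  have hcfix : ∀ x, x ∉ insert e S → c x = x := by
    intro x hx
    rw [hc]
    exact Equiv.swap_apply_of_ne_of_ne (fun h => hx (h ▸ hfs₀Y)) (fun h => hx (h ▸ heY))
  refine ⟨(c.trans f).trans c, fun x hx => ⟨?_, ?_⟩, fun x hx => ?_, ?_⟩
  · simp only [Equiv.trans_apply]
    exact hcY _ ((hf _ (hcY x hx)).1)
  · simp only [Equiv.trans_apply]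
    intro hfx
    have : f (c x) = c x := by
      have := congrArg c.symm hfx
      have hcs : c.symm = c := by rw [hc, Equiv.symm_swap]
      rw [Equiv.symm_apply_apply, hcs] at this
      exact this
    exact (hf _ (hcY x hx)).2 this
  · simp only [Equiv.trans_apply]
    rw [hcfix x hx, hfix x hx, hcfix x hx]
  · simp only [Equiv.trans_apply]
    have hc1 : c s₀ = s₀ := by
      rw [hc]
      exact Equiv.swap_apply_of_ne_of_ne (fun h => (hf s₀ hs₀Y).2 h.symm)
        (fun h => he (h ▸ hs₀))
    rw [hc1, hc, Equiv.swap_apply_left]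



open SimpleGraph Equiv

variable {V : Type*} {T : SimpleGraph V}

set_option maxHeartbeats 1600000 in
lemma doublestar [Fintype V] (hT : T.IsTree)
    (hle3 : ∀ a b : V, T.dist a b ≤ 3) {x y : V} (hxy : T.dist x y = 3) (t : V) :
    ∃ σ : Equiv.Perm V, (∀ a b, T.Adj a b → ¬ T.Adj (σ a) (σ b)) ∧ (∀ a, σ a ≠ a) ∧
      ¬ T.Adj (σ t) t := by
  classical
  obtain ⟨a, b, hxa, hab, hby⟩ := dist3_decomp hT hxy
  have depx : T.dist x x = 0 := SimpleGraph.dist_self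
  have depa : T.dist x a = 1 := SimpleGraph.dist_eq_one_iff_adj.mpr hxa
  have dab : T.dist a b = 1 := SimpleGraph.dist_eq_one_iff_adj.mpr hab
  have dby : T.dist b y = 1 := SimpleGraph.dist_eq_one_iff_adj.mpr hby
  have depb : T.dist x b = 2 := by
    have h1 := hT.isConnected.dist_triangle (u := x) (v := a) (w := b)
    have h2 := hT.isConnected.dist_triangle (u := x) (v := b) (w := y)
    omega
  have depy : T.dist x y = 3 := hxy
  have hdep3 : ∀ v, T.dist x v ≤ 3 := fun v => hle3 x v
  have dep0 : ∀ v, T.dist x v = 0 → v = x := by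
    intro v hv
    exact (hT.isConnected.dist_eq_zero_iff.mp hv).symm
  have dep1adj : ∀ v, T.dist x v = 1 → T.Adj x v := fun v hv =>
    SimpleGraph.dist_eq_one_iff_adj.mp hv
  -- every neighbour of x equals a
  have claimD1 : ∀ v, T.Adj x v → v = a := by
    intro v hv
    have hdv : T.dist x v = 1 := SimpleGraph.dist_eq_one_iff_adj.mpr hv
    by_contra hva
    have hvy : v ≠ y := by intro h; rw [h] at hdv; omega
    have hnadj : ¬ T.Adj v y := by
      intro h
      have := adj_dist hT x h
      omega
    have hcom : ∀ z, T.Adj v z → ¬ T.Adj z y := by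
      intro z h1 h2
      have hz1 := adj_dist hT x h1
      have hz2 := adj_dist hT x h2
      have hdz : T.dist x z = 2 := by omega
      have hzb : z = b := parent_unique hT x h2.symm (by omega) hby.symm (by omega)
      subst hzb
      exact hva (parent_unique hT x h1.symm (by omega) hab.symm (by omega))
    have h3 : T.dist v y = 3 := le_antisymm (hle3 v y) (three_le_dist hT hvy hnadj hcom)
    obtain ⟨z1, z2, ha1, ha2, ha3⟩ := dist3_decomp hT h3
    have e1 := adj_dist hT x ha1
    have e2 := adj_dist hT x ha2
    have e3 := adj_dist hT x ha3
    have hz2' := hdep3 z2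
    have hz1' := hdep3 z1
    omega
  -- every depth-2 vertex is adjacent to a
  have claim2 : ∀ v, T.dist x v = 2 → T.Adj a v := by
    intro v hv
    have hvx : v ≠ x := by intro h; rw [h] at hv; omega
    obtain ⟨p, hp, hpd⟩ := exists_parent hT x hvx
    have hdp : T.dist x p = 1 := by omega
    have : p = a := claimD1 p (dep1adj p hdp)
    subst this
    exact hp.symm
  -- every depth-3 vertex is adjacent to b
  have claimD3 : ∀ v, T.dist x v = 3 → T.Adj b v := by
    intro v hv
    rcases eq_or_ne v y with rfl | hvy
    · exact hby
    have hvx : v ≠ x := by intro h; rw [h] at hv; omega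
    obtain ⟨p, hp, hpd⟩ := exists_parent hT x hvx
    have hdp : T.dist x p = 2 := by omega
    rcases eq_or_ne p b with rfl | hpb
    · exact hp.symm
    exfalso
    have hnadj : ¬ T.Adj v y := by
      intro h
      have := adj_dist hT x h
      omega
    have hcom : ∀ z, T.Adj v z → ¬ T.Adj z y := by
      intro z h1 h2
      have hz1 := adj_dist hT x h1
      have hz2 := adj_dist hT x h2
      have hz3 := hdep3 z
      have hdz : T.dist x z = 2 := by omega
      have hzp : z = p := parent_unique hT x (p₁ := z) (p₂ := p) h1 (by omega) hp (by omega)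
      have hzb : z = b := parent_unique hT x h2.symm (by omega) hby.symm (by omega)
      exact hpb (hzp ▸ hzb)
    have h3 : T.dist v y = 3 := le_antisymm (hle3 v y) (three_le_dist hT hvy hnadj hcom)
    obtain ⟨z1, z2, ha1, ha2, ha3⟩ := dist3_decomp hT h3
    have e1 := adj_dist hT x ha1
    have e2 := adj_dist hT x ha2
    have e3 := adj_dist hT x ha3
    have hz2' := hdep3 z2
    have hz1' := hdep3 z1
    omega
  set A : Set V := {v | T.Adj a v ∧ v ≠ b} with hA
  set B : Set V := {v | T.Adj b v ∧ v ≠ a} with hB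
  have hxA : x ∈ A := ⟨hxa.symm, fun h => by rw [← h] at depb; omega⟩
  have hyB : y ∈ B := ⟨hby, fun h => by rw [← h] at depa; omega⟩
  have haneb : a ≠ b := fun h => by rw [← h] at depb; omega
  have haA : a ∉ A := fun h => T.irrefl h.1
  have hbB : b ∉ B := fun h => T.irrefl h.1
  have hbA : b ∉ A := fun h => h.2 rfl
  have haB : a ∉ B := fun h => h.2 rfl
  have hdepA : ∀ v ∈ A, T.dist x v = 0 ∨ T.dist x v = 2 := by
    intro v hv
    have := adj_dist hT x hv.1
    omega
  have hAleaf : ∀ v ∈ A, ∀ z, T.Adj v z → z = a := by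
    intro v hv z hz
    rcases hdepA v hv with h0 | h2
    · have : v = x := dep0 v h0
      subst this
      exact claimD1 z hz
    · have hdz := adj_dist hT x hz
      have hz3 := hdep3 z
      have : T.dist x z = 1 ∨ T.dist x z = 3 := by omega
      rcases this with h1 | h3
      · exact claimD1 z (dep1adj z h1)
      · exfalso
        have hbz : T.Adj b z := claimD3 z h3
        have : v = b := parent_unique hT x hz.symm (by omega) hbz.symm (by omega)
        exact hv.2 this
  have hBleaf : ∀ v ∈ B, ∀ z, T.Adj v z → z = b := by
    intro v hv z hz
    have hdv := adj_dist hT x hv.1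
    have hv3 := hdep3 v
    have : T.dist x v = 1 ∨ T.dist x v = 3 := by omega
    rcases this with h1 | h3
    · exact absurd (claimD1 v (dep1adj v h1)) hv.2
    · have hdz := adj_dist hT x hz
      have hz3 := hdep3 z
      have hdz2 : T.dist x z = 2 := by omega
      exact parent_unique hT x hz (by omega) hv.1.symm (by omega)
  have hABdisj : ∀ v, v ∈ A → v ∈ B → False := by
    intro v h1 h2
    exact haneb ((hAleaf v h1 b h2.1.symm).symm)
  have hpart : ∀ v, v = a ∨ v = b ∨ v ∈ A ∨ v ∈ B := by
    intro v
    have h3 := hdep3 v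
    have : T.dist x v = 0 ∨ T.dist x v = 1 ∨ T.dist x v = 2 ∨ T.dist x v = 3 := by omega
    rcases this with h | h | h | h
    · right; right; left; rw [dep0 v h]; exact hxA
    · left; exact claimD1 v (dep1adj v h)
    · have hav := claim2 v h
      rcases eq_or_ne v b with rfl | hvb
      · right; left; rfl
      · right; right; left; exact ⟨hav, hvb⟩
    · right; right; right
      refine ⟨claimD3 v h, ?_⟩
      intro hh; rw [hh] at h; omega
  have nadjAA : ∀ v ∈ A, ∀ z ∈ A, ¬ T.Adj v z := by
    intro v hv z hz h
    exact haA ((hAleaf v hv z h) ▸ hz)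
  have nadjAB : ∀ v ∈ A, ∀ z ∈ B, ¬ T.Adj v z := by
    intro v hv z hz h
    exact hz.2 (hAleaf v hv z h)
  have nadjAb : ∀ v ∈ A, ¬ T.Adj v b := by
    intro v hv h
    exact haneb (hAleaf v hv b h).symm
  have nadjBa : ∀ v ∈ B, ¬ T.Adj v a := by
    intro v hv h
    exact haneb (hBleaf v hv a h)
  have nadjBB : ∀ v ∈ B, ∀ z ∈ B, ¬ T.Adj v z := by
    intro v hv z hz h
    exact hbB ((hBleaf v hv z h) ▸ hz)
  have hedge : ∀ p q, T.Adj p q →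
      (p = a ∧ q = b) ∨ (p = b ∧ q = a) ∨ (p = a ∧ q ∈ A) ∨ (q = a ∧ p ∈ A) ∨
      (p = b ∧ q ∈ B) ∨ (q = b ∧ p ∈ B) := by
    intro p q hpq
    rcases hpart p with rfl | rfl | hp | hp
    · rcases eq_or_ne q b with rfl | hqb
      · exact Or.inl ⟨rfl, rfl⟩
      · exact Or.inr (Or.inr (Or.inl ⟨rfl, hpq, hqb⟩))
    · rcases eq_or_ne q a with rfl | hqa
      · exact Or.inr (Or.inl ⟨rfl, rfl⟩)
      · exact Or.inr (Or.inr (Or.inr (Or.inr (Or.inl ⟨rfl, hpq, hqa⟩))))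
    · exact Or.inr (Or.inr (Or.inr (Or.inl ⟨hAleaf p hp q hpq, hp⟩)))
    · exact Or.inr (Or.inr (Or.inr (Or.inr (Or.inr ⟨hBleaf p hp q hpq, hp⟩))))
  set FA : Finset V := Finset.univ.filter (· ∈ A) with hFA
  set FB : Finset V := Finset.univ.filter (· ∈ B) with hFB
  have hmemFA : ∀ v, v ∈ FA ↔ v ∈ A := by intro v; simp [hFA]
  have hmemFB : ∀ v, v ∈ FB ↔ v ∈ B := by intro v; simp [hFB]
  by_cases htab : t = a ∨ t = b
  · -- pattern 1 : controls the centres a and b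
    have hcard1 : 2 ≤ (insert b FA).card := by
      have h1 : x ∈ insert b FA := Finset.mem_insert_of_mem ((hmemFA x).mpr hxA)
      have h2 : b ∈ insert b FA := Finset.mem_insert_self _ _
      exact Finset.one_lt_card.mpr ⟨x, h1, b, h2, fun h => hbA (h ▸ hxA)⟩
    have hcard2 : 2 ≤ (insert a FB).card := by
      have h1 : y ∈ insert a FB := Finset.mem_insert_of_mem ((hmemFB y).mpr hyB)
      have h2 : a ∈ insert a FB := Finset.mem_insert_self _ _
      exact Finset.one_lt_card.mpr ⟨y, h1, a, h2, fun h => haB (h ▸ hyB)⟩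
    obtain ⟨ρ1, hρ1, hρ1f⟩ := exists_cyc (insert b FA) hcard1
    obtain ⟨ρ2, hρ2, hρ2f⟩ := exists_cyc (insert a FB) hcard2
    set σ : Equiv.Perm V := (ρ1.trans ρ2).trans (Equiv.swap a b) with hσ
    have hσv : ∀ v, σ v = Equiv.swap a b (ρ2 (ρ1 v)) := fun v => rfl
    have hanot1 : a ∉ insert b FA := by
      intro h
      rcases Finset.mem_insert.mp h with h' | h'
      · exact haneb h'
      · exact haA ((hmemFA _).mp h')
    have hbnot2 : b ∉ insert a FB := by
      intro h
      rcases Finset.mem_insert.mp h with h' | h'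
      · exact haneb h'.symm
      · exact hbB ((hmemFB _).mp h')
    have hAnot2 : ∀ v ∈ A, v ∉ insert a FB := by
      intro v hv h
      rcases Finset.mem_insert.mp h with h' | h'
      · exact haA (h' ▸ hv)
      · exact hABdisj v hv ((hmemFB _).mp h')
    have hBnot1 : ∀ v ∈ B, v ∉ insert b FA := by
      intro v hv h
      rcases Finset.mem_insert.mp h with h' | h'
      · exact hbB (h' ▸ hv)
      · exact hABdisj v ((hmemFA _).mp h') hv
    have hva : σ a ∈ B := by
      rw [hσv, hρ1f a hanot1]
      have h2 := hρ2 a (Finset.mem_insert_self _ _)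
      rcases Finset.mem_insert.mp h2.1 with h' | h'
      · exact absurd h' h2.2
      · have hB' := (hmemFB _).mp h'
        rw [Equiv.swap_apply_of_ne_of_ne (fun hh => haB (by rwa [hh] at hB'))
          (fun hh => hbB (by rwa [hh] at hB'))]
        exact hB'
    have hvb : σ b ∈ A := by
      rw [hσv]
      have h2 := hρ1 b (Finset.mem_insert_self _ _)
      rcases Finset.mem_insert.mp h2.1 with h' | h'
      · exact absurd h' h2.2
      · have hA' := (hmemFA _).mp h'
        rw [hρ2f _ (hAnot2 _ hA'), Equiv.swap_apply_of_ne_of_ne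
          (fun hh => haA (by rwa [hh] at hA')) (fun hh => hbA (by rwa [hh] at hA'))]
        exact hA'
    have hvA : ∀ v ∈ A, (σ v ∈ A ∧ σ v ≠ v) ∨ σ v = a := by
      intro v hv
      have h2 := hρ1 v (Finset.mem_insert_of_mem ((hmemFA _).mpr hv))
      rcases Finset.mem_insert.mp h2.1 with h' | h'
      · right
        rw [hσv, h', hρ2f b hbnot2, Equiv.swap_apply_right]
      · left
        have hA' := (hmemFA _).mp h'
        have hval : σ v = ρ1 v := by
          rw [hσv, hρ2f _ (hAnot2 _ hA'), Equiv.swap_apply_of_ne_of_ne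
            (fun hh => haA (by rwa [hh] at hA')) (fun hh => hbA (by rwa [hh] at hA'))]
        rw [hval]
        exact ⟨hA', h2.2⟩
    have hvB : ∀ v ∈ B, (σ v ∈ B ∧ σ v ≠ v) ∨ σ v = b := by
      intro v hv
      have h1 : ρ1 v = v := hρ1f v (hBnot1 v hv)
      have h2 := hρ2 v (Finset.mem_insert_of_mem ((hmemFB _).mpr hv))
      rcases Finset.mem_insert.mp h2.1 with h' | h'
      · right
        rw [hσv, h1, h', Equiv.swap_apply_left]
      · left
        have hB' := (hmemFB _).mp h'
        have hval : σ v = ρ2 v := by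
          rw [hσv, h1, Equiv.swap_apply_of_ne_of_ne
            (fun hh => haB (by rwa [hh] at hB')) (fun hh => hbB (by rwa [hh] at hB'))]
        rw [hval]
        exact ⟨hB', h2.2⟩
    have hfpf : ∀ v, σ v ≠ v := by
      intro v
      rcases hpart v with rfl | rfl | hv | hv
      · intro h; exact haB (h ▸ hva)
      · intro h; exact hbA (h ▸ hvb)
      · rcases hvA v hv with h | h
        · exact h.2
        · intro hh; rw [hh] at h; exact haA (h ▸ hv)
      · rcases hvB v hv with h | h
        · exact h.2
        · intro hh; rw [hh] at h; exact hbB (h ▸ hv)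
    have hmaster : ∀ p q : V, (p = a ∧ q = b) ∨ (p = a ∧ q ∈ A) ∨ (p = b ∧ q ∈ B) →
        ¬ T.Adj (σ p) (σ q) := by
      rintro p q (⟨rfl, rfl⟩ | ⟨rfl, hq⟩ | ⟨rfl, hq⟩)
      · exact fun hh => nadjAB _ hvb _ hva hh.symm
      · rcases hvA q hq with h | h
        · exact fun hh => nadjAB _ h.1 _ hva hh.symm
        · rw [h]; exact fun hh => nadjBa _ hva hh
      · rcases hvB q hq with h | h
        · exact nadjAB _ hvb _ h.1
        · rw [h]; exact fun hh => nadjAb _ hvb hh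
    refine ⟨σ, ?_, hfpf, ?_⟩
    · intro p q hpq
      rcases hedge p q hpq with h | h | h | h | h | h
      · exact hmaster p q (Or.inl h)
      · exact fun hh => hmaster q p (Or.inl ⟨h.2, h.1⟩) hh.symm
      · exact hmaster p q (Or.inr (Or.inl h))
      · exact fun hh => hmaster q p (Or.inr (Or.inl ⟨h.1, h.2⟩)) hh.symm
      · exact hmaster p q (Or.inr (Or.inr h))
      · exact fun hh => hmaster q p (Or.inr (Or.inr ⟨h.1, h.2⟩)) hh.symm
    · rcases htab with rfl | rfl
      · exact fun hh => nadjBa _ hva hh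
      · exact fun hh => nadjAb _ hvb hh
  · -- pattern 0 : t lies in A ∪ B
    push_neg at htab
    have htAB : t ∈ A ∨ t ∈ B := by
      rcases hpart t with rfl | rfl | h | h
      · exact absurd rfl htab.1
      · exact absurd rfl htab.2
      · exact Or.inl h
      · exact Or.inr h
    have hcard1 : 2 ≤ (insert a FA).card := by
      have h1 : x ∈ insert a FA := Finset.mem_insert_of_mem ((hmemFA x).mpr hxA)
      have h2 : a ∈ insert a FA := Finset.mem_insert_self _ _
      exact Finset.one_lt_card.mpr ⟨x, h1, a, h2, fun h => haA (h ▸ hxA)⟩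
    have hcard2 : 2 ≤ (insert b FB).card := by
      have h1 : y ∈ insert b FB := Finset.mem_insert_of_mem ((hmemFB y).mpr hyB)
      have h2 : b ∈ insert b FB := Finset.mem_insert_self _ _
      exact Finset.one_lt_card.mpr ⟨y, h1, b, h2, fun h => hbB (h ▸ hyB)⟩
    obtain ⟨ρ1, hρ1, hρ1f⟩ := exists_cyc (insert a FA) hcard1
    obtain ⟨ρ2, hρ2, hρ2f⟩ := exists_cyc (insert b FB) hcard2
    set σ : Equiv.Perm V := (ρ1.trans ρ2).trans (Equiv.swap a b) with hσ
    have hσv : ∀ v, σ v = Equiv.swap a b (ρ2 (ρ1 v)) := fun v => rfl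
    have hbnot1 : b ∉ insert a FA := by
      intro h
      rcases Finset.mem_insert.mp h with h' | h'
      · exact haneb h'.symm
      · exact hbA ((hmemFA _).mp h')
    have hanot2 : a ∉ insert b FB := by
      intro h
      rcases Finset.mem_insert.mp h with h' | h'
      · exact haneb h'
      · exact haB ((hmemFB _).mp h')
    have hAnot2 : ∀ v ∈ A, v ∉ insert b FB := by
      intro v hv h
      rcases Finset.mem_insert.mp h with h' | h'
      · exact hbA (h' ▸ hv)
      · exact hABdisj v hv ((hmemFB _).mp h')
    have hBnot1 : ∀ v ∈ B, v ∉ insert a FA := by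
      intro v hv h
      rcases Finset.mem_insert.mp h with h' | h'
      · exact haB (h' ▸ hv)
      · exact hABdisj v ((hmemFA _).mp h') hv
    have hva : σ a ∈ A := by
      rw [hσv]
      have h2 := hρ1 a (Finset.mem_insert_self _ _)
      rcases Finset.mem_insert.mp h2.1 with h' | h'
      · exact absurd h' h2.2
      · have hA' := (hmemFA _).mp h'
        rw [hρ2f _ (hAnot2 _ hA'), Equiv.swap_apply_of_ne_of_ne
          (fun hh => haA (by rwa [hh] at hA')) (fun hh => hbA (by rwa [hh] at hA'))]
        exact hA'
    have hvb : σ b ∈ B := by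
      rw [hσv, hρ1f b hbnot1]
      have h2 := hρ2 b (Finset.mem_insert_self _ _)
      rcases Finset.mem_insert.mp h2.1 with h' | h'
      · exact absurd h' h2.2
      · have hB' := (hmemFB _).mp h'
        rw [Equiv.swap_apply_of_ne_of_ne (fun hh => haB (by rwa [hh] at hB'))
          (fun hh => hbB (by rwa [hh] at hB'))]
        exact hB'
    have hvA : ∀ v ∈ A, (σ v ∈ A ∧ σ v ≠ v) ∨ σ v = b := by
      intro v hv
      have h2 := hρ1 v (Finset.mem_insert_of_mem ((hmemFA _).mpr hv))
      rcases Finset.mem_insert.mp h2.1 with h' | h'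
      · right
        rw [hσv, h', hρ2f a hanot2, Equiv.swap_apply_left]
      · left
        have hA' := (hmemFA _).mp h'
        have hval : σ v = ρ1 v := by
          rw [hσv, hρ2f _ (hAnot2 _ hA'), Equiv.swap_apply_of_ne_of_ne
            (fun hh => haA (by rwa [hh] at hA')) (fun hh => hbA (by rwa [hh] at hA'))]
        rw [hval]
        exact ⟨hA', h2.2⟩
    have hvB : ∀ v ∈ B, (σ v ∈ B ∧ σ v ≠ v) ∨ σ v = a := by
      intro v hv
      have h1 : ρ1 v = v := hρ1f v (hBnot1 v hv)
      have h2 := hρ2 v (Finset.mem_insert_of_mem ((hmemFB _).mpr hv))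
      rcases Finset.mem_insert.mp h2.1 with h' | h'
      · right
        rw [hσv, h1, h', Equiv.swap_apply_right]
      · left
        have hB' := (hmemFB _).mp h'
        have hval : σ v = ρ2 v := by
          rw [hσv, h1, Equiv.swap_apply_of_ne_of_ne
            (fun hh => haB (by rwa [hh] at hB')) (fun hh => hbB (by rwa [hh] at hB'))]
        rw [hval]
        exact ⟨hB', h2.2⟩
    have hfpf : ∀ v, σ v ≠ v := by
      intro v
      rcases hpart v with rfl | rfl | hv | hv
      · intro h; exact haA (h ▸ hva)
      · intro h; exact hbB (h ▸ hvb)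
      · rcases hvA v hv with h | h
        · exact h.2
        · intro hh; rw [hh] at h; exact hbA (h ▸ hv)
      · rcases hvB v hv with h | h
        · exact h.2
        · intro hh; rw [hh] at h; exact haB (h ▸ hv)
    have hmaster : ∀ p q : V, (p = a ∧ q = b) ∨ (p = a ∧ q ∈ A) ∨ (p = b ∧ q ∈ B) →
        ¬ T.Adj (σ p) (σ q) := by
      rintro p q (⟨rfl, rfl⟩ | ⟨rfl, hq⟩ | ⟨rfl, hq⟩)
      · exact nadjAB _ hva _ hvb
      · rcases hvA q hq with h | h
        · exact nadjAA _ hva _ h.1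
        · rw [h]; exact nadjAb _ hva
      · rcases hvB q hq with h | h
        · exact nadjBB _ hvb _ h.1
        · rw [h]; exact fun hh => nadjBa _ hvb hh
    refine ⟨σ, ?_, hfpf, ?_⟩
    · intro p q hpq
      rcases hedge p q hpq with h | h | h | h | h | h
      · exact hmaster p q (Or.inl h)
      · exact fun hh => hmaster q p (Or.inl ⟨h.2, h.1⟩) hh.symm
      · exact hmaster p q (Or.inr (Or.inl h))
      · exact fun hh => hmaster q p (Or.inr (Or.inl ⟨h.1, h.2⟩)) hh.symm
      · exact hmaster p q (Or.inr (Or.inr h))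
      · exact fun hh => hmaster q p (Or.inr (Or.inr ⟨h.1, h.2⟩)) hh.symm
    · rcases htAB with ht | ht
      · rcases hvA t ht with h | h
        · exact nadjAA _ h.1 _ ht
        · rw [h]; exact fun hh => nadjAb _ ht hh.symm
      · rcases hvB t ht with h | h
        · exact nadjBB _ h.1 _ ht
        · rw [h]; exact fun hh => nadjBa _ ht hh.symm



open SimpleGraph Equiv

universe u

variable {V : Type u} {T : SimpleGraph V}

set_option maxHeartbeats 3200000 in
lemma step [Fintype V] (hT : T.IsTree)
    (ih : ∀ (W : Type u) [Fintype W] (S : SimpleGraph W), Fintype.card W < Fintype.card V →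
      S.IsTree → (∃ x y : W, 3 ≤ S.dist x y) → ∀ t' : W,
      ∃ σ' : Equiv.Perm W, (∀ a b, S.Adj a b → ¬ S.Adj (σ' a) (σ' b)) ∧
        (∀ a, σ' a ≠ a) ∧ ¬ S.Adj (σ' t') t')
    (r u w : V) (hmax : ∀ z, T.dist r z ≤ T.dist r u) (hd : 4 ≤ T.dist r u)
    (huw : T.Adj u w) (hwd : T.dist r w + 1 = T.dist r u)
    (t : V) (htu : t ≠ u) (htw : t ≠ w) :
    ∃ σ : Equiv.Perm V, (∀ a b, T.Adj a b → ¬ T.Adj (σ a) (σ b)) ∧ (∀ a, σ a ≠ a) ∧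
      ¬ T.Adj (σ t) t := by
  classical
  have hdr : T.dist r r = 0 := SimpleGraph.dist_self
  -- u is a leaf with unique neighbour w
  have hleaf : ∀ y, T.Adj u y → y = w := by
    intro y hy
    have h1 := adj_dist hT r hy
    have h2 := hmax y
    exact parent_unique hT r hy (by omega) huw (by omega)
  have hwu : w ≠ u := fun h => T.irrefl (h ▸ huw)
  have hwr : w ≠ r := by intro h; rw [h] at hwd; omega
  obtain ⟨m, hwm, hmd⟩ := exists_parent hT r hwr
  have hmu : m ≠ u := by intro h; rw [h] at hmd; omega
  have hmw : m ≠ w := by intro h; rw [h] at hmd; omega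
  have hmr : m ≠ r := by intro h; rw [h] at hmd; omega
  have hru : r ≠ u := by intro h; rw [← h] at hd; omega
  have hrw : r ≠ w := fun h => hwr h.symm
  have hur : u ≠ r := fun h => hru h.symm
  -- the graph with u removed
  set s₁ : Set V := {v | v ≠ u} with hs₁
  have hmems₁ : ∀ {v : V}, v ∈ s₁ ↔ v ≠ u := by intro v; rfl
  have hT₁ : (T.induce s₁).IsTree := delete_leaf_isTree hT huw hleaf
  have hcard₁ : Fintype.card ↥s₁ < Fintype.card V := by
    have : ¬ (u ∈ s₁) := by simp [hs₁]
    exact Fintype.card_subtype_lt (x := u) this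
  have hpair₁ : ∃ x y : ↥s₁, 3 ≤ (T.induce s₁).dist x y := by
    refine ⟨⟨r, hmems₁.mpr hru⟩, ⟨w, hmems₁.mpr hwu⟩, ?_⟩
    have h0 := induce_dist_le hT₁.isConnected ⟨r, hmems₁.mpr hru⟩ ⟨w, hmems₁.mpr hwu⟩
    have h1 : T.dist r w ≤ (T.induce s₁).dist ⟨r, hmems₁.mpr hru⟩ ⟨w, hmems₁.mpr hwu⟩ := h0
    omega
  by_cases hdeg : ∃ y, T.Adj w y ∧ y ≠ u ∧ y ≠ m
  · -- main case : w has a third neighbour, remove only u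
    obtain ⟨σ', hpack', hfpf', hC'⟩ := ih ↥s₁ (T.induce s₁) hcard₁ hT₁ hpair₁ ⟨t, hmems₁.mpr htu⟩
    set e : Equiv.Perm V := Equiv.Perm.ofSubtype σ' with he
    have he_mem : ∀ (x : V) (hx : x ≠ u), e x = ↑(σ' ⟨x, hmems₁.mpr hx⟩) := by
      intro x hx
      exact Equiv.Perm.ofSubtype_apply_of_mem σ' (hmems₁.mpr hx)
    have he_fix : e u = u := Equiv.Perm.ofSubtype_apply_of_not_mem σ' (by simp [hs₁])
    have he_ne_u : ∀ x, x ≠ u → e x ≠ u := by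
      intro x hx
      rw [he_mem x hx]
      exact (σ' ⟨x, hmems₁.mpr hx⟩).2
    have he_fpf : ∀ x, x ≠ u → e x ≠ x := by
      intro x hx
      rw [he_mem x hx]
      intro hh
      exact hfpf' ⟨x, hmems₁.mpr hx⟩ (Subtype.ext hh)
    have he_pack : ∀ x y, x ≠ u → y ≠ u → T.Adj x y → ¬ T.Adj (e x) (e y) := by
      intro x y hx hy hxy
      rw [he_mem x hx, he_mem y hy]
      exact hpack' ⟨x, hmems₁.mpr hx⟩ ⟨y, hmems₁.mpr hy⟩ hxy
    have he_C : ¬ T.Adj (e t) t := by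
      rw [he_mem t htu]
      exact hC'
    have he_eq_u : ∀ x, e x = u → x = u := by
      intro x hx
      by_contra hxu
      exact he_ne_u x hxu hx
    set b : V := e.symm w with hb
    have heb : e b = w := e.apply_symm_apply w
    have hbu : b ≠ u := by
      intro h
      rw [h, he_fix] at heb
      exact hwu heb.symm
    have hbw : b ≠ w := by
      intro h
      rw [h] at heb
      exact he_fpf w hwu heb
    -- find the splice point z
    have hz : ∃ z : V, z ≠ u ∧ (z = w ∨ ¬ T.Adj (e z) (e w)) ∧
        (∀ y', T.Adj z y' → y' ≠ u → e y' ≠ w) := by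
      by_cases hadjwb : T.Adj w b
      · by_cases hzz : ∃ z, z ≠ u ∧ z ≠ w ∧ ¬ T.Adj b z ∧ ¬ T.Adj (e z) (e w)
        · obtain ⟨z, h1, h2, h3, h4⟩ := hzz
          refine ⟨z, h1, Or.inr h4, ?_⟩
          intro y' hy' hyu hew
          have hyb : y' = b := e.injective (by rw [hew, heb])
          rw [hyb] at hy'
          exact h3 hy'.symm
        · exfalso
          push_neg at hzz
          have hcu : e w ≠ u := he_ne_u w hwu
          have hcw : T.Adj w (e w) := by
            have h1 := hzz b hbu hbw (T.irrefl)
            rwa [heb] at h1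
          -- classification of the neighbours of w
          have hclass : ∀ y', T.Adj w y' → y' = u ∨ y' = m ∨
              (T.dist r y' = T.dist r u ∧ ∀ z', T.Adj y' z' → z' = w) := by
            intro y' hy'
            rcases adj_dist hT r hy' with hlow | hhigh
            · -- dist r y' = dist r w + 1 = dist r u : a deepest child, hence a leaf
              refine Or.inr (Or.inr ⟨by omega, ?_⟩)
              intro z' hz'
              have h2 := adj_dist hT r hz'
              have h3 := hmax z'
              exact parent_unique hT r hz' (by omega) hy'.symm (by omega)
            · right; left
              exact parent_unique hT r hy' (by omega) hwm (by omega)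
          have hbclass := hclass b hadjwb
          have hcclass := hclass (e w) hcw
          rcases hbclass with h | hbm | ⟨hbd, hbleaf⟩
          · exact hbu h
          · -- b = m
            rcases hcclass with h | hcm | ⟨hcd, hcleaf⟩
            · exact hcu h
            · -- b = m and c = m : use the extra neighbour from hdeg
              obtain ⟨y, hwy, hyu, hym⟩ := hdeg
              have hyw : y ≠ w := fun h => T.irrefl (h ▸ hwy)
              have h1 := hzz y hyu hyw
              have h2 : ¬ T.Adj b y := by
                rw [hbm]
                intro hh
                rcases hclass y hwy with h | h | ⟨_, hyleaf⟩
                · exact hyu h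
                · exact hym h
                · exact hmw (hyleaf m hh.symm)
              have h3 := h1 h2
              have h4 := he_pack w y hwu hyu hwy
              rw [hcm] at h3 h4
              exact h4 h3.symm
            · -- b = m and c a deep leaf : plug in z = r
              have h1 := hzz r hru hrw
              have h2 : ¬ T.Adj b r := by
                rw [hbm]
                intro hh
                rcases adj_dist hT r hh with h | h <;> omega
              have h3 := h1 h2
              have h4 : e r = w := hcleaf (e r) h3.symm
              have h5 : r = b := e.injective (by rw [h4, heb])
              rw [hbm] at h5
              exact hmr h5.symm
          · -- b is a deep leaf
            rcases hcclass with h | hcm | ⟨hcd, hcleaf⟩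
            · exact hcu h
            · -- c = m : plug in z = e.symm r
              set z : V := e.symm r with hzdef
              have hez : e z = r := e.apply_symm_apply r
              have hzu : z ≠ u := by
                intro h
                rw [h, he_fix] at hez
                exact hur hez
              have hzw : z ≠ w := by
                intro h
                rw [h, hcm] at hez
                exact hmr hez
              have h1 := hzz z hzu hzw
              have h2 : ¬ T.Adj b z := by
                intro hh
                exact hzw (hbleaf z hh)
              have h3 := h1 h2
              rw [hez, hcm] at h3
              rcases adj_dist hT r h3 with h | h <;> omega
            · -- b and c both deep leaves : plug in z = m
              have h1 := hzz m hmu hmw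
              have h2 : ¬ T.Adj b m := by
                intro hh
                exact hmw (hbleaf m hh)
              have h3 := h1 h2
              have h4 : e m = w := hcleaf (e m) h3.symm
              have h5 : m = b := e.injective (by rw [h4, heb])
              rw [h5] at hmd
              omega
      · -- z = w works
        refine ⟨w, hwu, Or.inl rfl, ?_⟩
        intro y' hy' hyu hew
        have hyb : y' = b := e.injective (by rw [hew, heb])
        rw [hyb] at hy'
        exact hadjwb hy'
    obtain ⟨z, hzu, hzw, hzR1⟩ := hz
    set σ : Equiv.Perm V := (Equiv.swap u z).trans e with hσ
    have hσu : σ u = e z := by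
      simp only [hσ, Equiv.trans_apply, Equiv.swap_apply_left]
    have hσz : σ z = u := by
      simp only [hσ, Equiv.trans_apply, Equiv.swap_apply_right, he_fix]
    have hσx : ∀ x, x ≠ u → x ≠ z → σ x = e x := by
      intro x h1 h2
      simp only [hσ, Equiv.trans_apply, Equiv.swap_apply_of_ne_of_ne h1 h2]
    refine ⟨σ, ?_, ?_, ?_⟩
    · -- packing
      intro x y hxy
      have hxyne : x ≠ y := fun h => T.irrefl (h ▸ hxy)
      rcases eq_or_ne x u with rfl | hxu
      · -- x = u, y = w
        have hyw : y = w := hleaf y hxy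
        rw [hyw, hσu]
        rcases eq_or_ne z w with hzw'' | hzw'
        · rw [← hzw'', hσz]
          intro hh
          exact he_fpf z hzu ((hleaf (e z) hh.symm).trans hzw''.symm)
        · rw [hσx w hwu (fun h => hzw' h.symm)]
          rcases hzw with h | h
          · exact absurd h hzw'
          · exact h
      rcases eq_or_ne y u with rfl | hyu
      · have hxw : x = w := hleaf x hxy.symm
        rw [hxw, hσu]
        rcases eq_or_ne z w with hzw'' | hzw'
        · rw [← hzw'', hσz]
          intro hh
          exact he_fpf z hzu ((hleaf (e z) hh).trans hzw''.symm)
        · rw [hσx w hwu (fun h => hzw' h.symm)]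
          rcases hzw with h | h
          · exact absurd h hzw'
          · exact fun hh => h hh.symm
      rcases eq_or_ne x z with rfl | hxz
      · rw [hσz, hσx y hyu (fun h => hxyne h.symm)]
        intro hh
        exact hzR1 y hxy hyu (hleaf (e y) hh)
      rcases eq_or_ne y z with rfl | hyz
      · rw [hσz, hσx x hxu hxz]
        intro hh
        exact hzR1 x hxy.symm hxu (hleaf (e x) hh.symm)
      · rw [hσx x hxu hxz, hσx y hyu hyz]
        exact he_pack x y hxu hyu hxy
    · -- fixed point free
      intro x
      rcases eq_or_ne x u with rfl | hxu
      · rw [hσu]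
        intro hh
        exact hzu (he_eq_u z hh)
      rcases eq_or_ne x z with rfl | hxz
      · rw [hσz]
        exact fun hh => hzu hh.symm
      · rw [hσx x hxu hxz]
        exact he_fpf x hxu
    · -- the distinguished vertex
      rcases eq_or_ne t z with rfl | htz
      · rw [hσz]
        intro hh
        exact htw (hleaf t hh)
      · rw [hσx t htu htz]
        exact he_C
  · -- w has degree two : N(w) = {u, m}
    push_neg at hdeg
    have hdeg2 : ∀ y, T.Adj w y → y = u ∨ y = m := by
      intro y hy
      by_contra hcon
      push_neg at hcon
      exact hcon.2 (hdeg y hy hcon.1)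
    set w₁ : ↥s₁ := ⟨w, hmems₁.mpr hwu⟩ with hw₁def
    set m₁ : ↥s₁ := ⟨m, hmems₁.mpr hmu⟩ with hm₁def
    have hwm₁ : (T.induce s₁).Adj w₁ m₁ := hwm
    have hleaf₁ : ∀ y₁, (T.induce s₁).Adj w₁ y₁ → y₁ = m₁ := by
      intro y₁ hy₁
      have : T.Adj w ↑y₁ := hy₁
      rcases hdeg2 _ this with h | h
      · exact absurd h y₁.2
      · exact Subtype.ext h
    have hT₂ : ((T.induce s₁).induce {v₁ | v₁ ≠ w₁}).IsTree :=
      delete_leaf_isTree hT₁ hwm₁ hleaf₁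
    set s₂ : Set ↥s₁ := {v₁ | v₁ ≠ w₁} with hs₂
    have hmems₂ : ∀ {v₁ : ↥s₁}, v₁ ∈ s₂ ↔ v₁ ≠ w₁ := by intro v₁; rfl
    have hcard₂ : Fintype.card ↥s₂ < Fintype.card V := by
      have h1 : ¬ (w₁ ∈ s₂) := by simp [hs₂]
      have h2 : Fintype.card ↥s₂ < Fintype.card ↥s₁ := Fintype.card_subtype_lt (x := w₁) h1
      omega
    have hcoe₂ : ∀ (x : V) (hxu : x ≠ u) (hxw : x ≠ w),
        (⟨x, hmems₁.mpr hxu⟩ : ↥s₁) ∈ s₂ := by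
      intro x hxu hxw
      rw [hmems₂]
      intro hh
      exact hxw (congrArg Subtype.val hh)
    by_cases hB : ∃ p q : V, p ≠ u ∧ p ≠ w ∧ q ≠ u ∧ q ≠ w ∧ 3 ≤ T.dist p q
    · -- remove both u and w, splice the path back in
      obtain ⟨p, q, hpu, hpw, hqu, hqw, hpq3⟩ := hB
      have hpair₂ : ∃ x y : ↥s₂, 3 ≤ ((T.induce s₁).induce s₂).dist x y := by
        refine ⟨⟨⟨p, hmems₁.mpr hpu⟩, hcoe₂ p hpu hpw⟩,
                ⟨⟨q, hmems₁.mpr hqu⟩, hcoe₂ q hqu hqw⟩, ?_⟩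
        have h0 := induce_dist_le hT₁.isConnected ⟨p, hmems₁.mpr hpu⟩ ⟨q, hmems₁.mpr hqu⟩
        have h0' : T.dist p q ≤ (T.induce s₁).dist ⟨p, hmems₁.mpr hpu⟩ ⟨q, hmems₁.mpr hqu⟩ := h0
        have h1 := induce_dist_le hT₂.isConnected ⟨⟨p, hmems₁.mpr hpu⟩, hcoe₂ p hpu hpw⟩
          ⟨⟨q, hmems₁.mpr hqu⟩, hcoe₂ q hqu hqw⟩
        have h1' : (T.induce s₁).dist ⟨p, hmems₁.mpr hpu⟩ ⟨q, hmems₁.mpr hqu⟩ ≤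
            ((T.induce s₁).induce s₂).dist ⟨⟨p, hmems₁.mpr hpu⟩, hcoe₂ p hpu hpw⟩
            ⟨⟨q, hmems₁.mpr hqu⟩, hcoe₂ q hqu hqw⟩ := h1
        omega
      obtain ⟨σ'', hpack'', hfpf'', hC''⟩ := ih ↥s₂ ((T.induce s₁).induce s₂) hcard₂ hT₂ hpair₂
        ⟨⟨t, hmems₁.mpr htu⟩, hcoe₂ t htu htw⟩
      set e₁ : Equiv.Perm ↥s₁ := Equiv.Perm.ofSubtype σ'' with he₁
      set e₀ : Equiv.Perm V := Equiv.Perm.ofSubtype e₁ with he₀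
      have he₀u : e₀ u = u := Equiv.Perm.ofSubtype_apply_of_not_mem e₁ (by simp [hs₁])
      have he₁w : e₁ w₁ = w₁ := Equiv.Perm.ofSubtype_apply_of_not_mem σ'' (by simp [hs₂])
      have he₀w : e₀ w = w := by
        have h1 : e₀ w = ↑(e₁ ⟨w, hmems₁.mpr hwu⟩) :=
          Equiv.Perm.ofSubtype_apply_of_mem e₁ (hmems₁.mpr hwu)
        rw [h1]
        rw [show (⟨w, hmems₁.mpr hwu⟩ : ↥s₁) = w₁ from rfl, he₁w]
      have he₀x : ∀ (x : V) (hxu : x ≠ u) (hxw : x ≠ w),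
          e₀ x = ↑↑(σ'' ⟨⟨x, hmems₁.mpr hxu⟩, hcoe₂ x hxu hxw⟩) := by
        intro x hxu hxw
        have h1 : e₀ x = ↑(e₁ ⟨x, hmems₁.mpr hxu⟩) :=
          Equiv.Perm.ofSubtype_apply_of_mem e₁ (hmems₁.mpr hxu)
        rw [h1]
        congr 1
        exact Equiv.Perm.ofSubtype_apply_of_mem σ'' (hcoe₂ x hxu hxw)
      have he₀ne_u : ∀ x, x ≠ u → x ≠ w → e₀ x ≠ u := by
        intro x hxu hxw
        rw [he₀x x hxu hxw]
        exact (↑(σ'' ⟨⟨x, hmems₁.mpr hxu⟩, hcoe₂ x hxu hxw⟩) : ↥s₁).2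
      have he₀ne_w : ∀ x, x ≠ u → x ≠ w → e₀ x ≠ w := by
        intro x hxu hxw
        rw [he₀x x hxu hxw]
        intro hh
        exact (σ'' ⟨⟨x, hmems₁.mpr hxu⟩, hcoe₂ x hxu hxw⟩).2 (Subtype.ext hh)
      have he₀fpf : ∀ x, x ≠ u → x ≠ w → e₀ x ≠ x := by
        intro x hxu hxw
        rw [he₀x x hxu hxw]
        intro hh
        exact hfpf'' ⟨⟨x, hmems₁.mpr hxu⟩, hcoe₂ x hxu hxw⟩ (Subtype.ext (Subtype.ext hh))
      have he₀pack : ∀ x y, x ≠ u → x ≠ w → y ≠ u → y ≠ w → T.Adj x y →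
          ¬ T.Adj (e₀ x) (e₀ y) := by
        intro x y hxu hxw hyu hyw hxy
        rw [he₀x x hxu hxw, he₀x y hyu hyw]
        exact hpack'' ⟨⟨x, hmems₁.mpr hxu⟩, hcoe₂ x hxu hxw⟩
          ⟨⟨y, hmems₁.mpr hyu⟩, hcoe₂ y hyu hyw⟩ hxy
      have he₀C : ¬ T.Adj (e₀ t) t := by
        rw [he₀x t htu htw]
        exact hC''
      set z₀ : V := e₀.symm m with hz₀def
      have hez₀ : e₀ z₀ = m := e₀.apply_symm_apply m
      have hz₀u : z₀ ≠ u := by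
        intro h
        rw [h, he₀u] at hez₀
        exact hmu hez₀.symm
      have hz₀w : z₀ ≠ w := by
        intro h
        rw [h, he₀w] at hez₀
        exact hmw hez₀.symm
      have hz₀m : z₀ ≠ m := by
        intro h
        rw [h] at hez₀
        exact he₀fpf m hmu hmw hez₀
      set σ : Equiv.Perm V := ((Equiv.swap w u).trans (Equiv.swap z₀ w)).trans e₀ with hσ
      have hσz₀ : σ z₀ = w := by
        simp only [hσ, Equiv.trans_apply]
        rw [Equiv.swap_apply_of_ne_of_ne hz₀w hz₀u, Equiv.swap_apply_left, he₀w]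
      have hσw : σ w = u := by
        simp only [hσ, Equiv.trans_apply]
        rw [Equiv.swap_apply_left, Equiv.swap_apply_of_ne_of_ne (fun h => hz₀u h.symm)
          (fun h => hwu h.symm), he₀u]
      have hσu : σ u = m := by
        simp only [hσ, Equiv.trans_apply]
        rw [Equiv.swap_apply_right, Equiv.swap_apply_right, hez₀]
      have hσx : ∀ x, x ≠ u → x ≠ w → x ≠ z₀ → σ x = e₀ x := by
        intro x h1 h2 h3
        simp only [hσ, Equiv.trans_apply]
        rw [Equiv.swap_apply_of_ne_of_ne h2 h1, Equiv.swap_apply_of_ne_of_ne h3 h2]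
      have hnadj_mu : ¬ T.Adj m u := by
        intro hh
        rcases adj_dist hT r hh with h | h <;> omega
      refine ⟨σ, ?_, ?_, ?_⟩
      · intro x y hxy
        have hxyne : x ≠ y := fun h => T.irrefl (h ▸ hxy)
        rcases eq_or_ne x u with rfl | hxu
        · have hyw : y = w := hleaf y hxy
          rw [hyw, hσu, hσw]
          exact hnadj_mu
        rcases eq_or_ne y u with rfl | hyu
        · have hxw : x = w := hleaf x hxy.symm
          rw [hxw, hσu, hσw]
          exact fun hh => hnadj_mu hh.symm
        rcases eq_or_ne x w with rfl | hxw
        · rcases hdeg2 y hxy with h | h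
          · exact absurd h hyu
          · rw [h, hσw, hσx m hmu hmw (fun hh => hz₀m hh.symm)]
            intro hh
            have := hleaf (e₀ m) hh
            rw [← he₀w] at this
            exact hmw (e₀.injective this)
        rcases eq_or_ne y w with rfl | hyw
        · rcases hdeg2 x hxy.symm with h | h
          · exact absurd h hxu
          · rw [h, hσw, hσx m hmu hmw (fun hh => hz₀m hh.symm)]
            intro hh
            have := hleaf (e₀ m) hh.symm
            rw [← he₀w] at this
            exact hmw (e₀.injective this)
        rcases eq_or_ne x z₀ with rfl | hxz₀
        · rw [hσz₀, hσx y hyu hyw (fun h => hxyne h.symm)]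
          intro hh
          rcases hdeg2 (e₀ y) hh with h | h
          · exact he₀ne_u y hyu hyw h
          · rw [← hez₀] at h
            exact hxyne (e₀.injective h).symm
        rcases eq_or_ne y z₀ with rfl | hyz₀
        · rw [hσz₀, hσx x hxu hxw hxz₀]
          intro hh
          rcases hdeg2 (e₀ x) hh.symm with h | h
          · exact he₀ne_u x hxu hxw h
          · rw [← hez₀] at h
            exact hxyne (e₀.injective h)
        · rw [hσx x hxu hxw hxz₀, hσx y hyu hyw hyz₀]
          exact he₀pack x y hxu hxw hyu hyw hxy
      · intro x
        rcases eq_or_ne x u with rfl | hxu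
        · rw [hσu]; exact hmu
        rcases eq_or_ne x w with rfl | hxw
        · rw [hσw]; exact fun h => hwu h.symm
        rcases eq_or_ne x z₀ with rfl | hxz₀
        · rw [hσz₀]; exact fun h => hz₀w h.symm
        · rw [hσx x hxu hxw hxz₀]
          exact he₀fpf x hxu hxw
      · rcases eq_or_ne t z₀ with htz | htz₀
        · rw [htz, hσz₀]
          intro hh
          rcases hdeg2 z₀ hh with h | h
          · exact hz₀u h
          · exact hz₀m h
        · rw [hσx t htu htw htz₀]
          exact he₀C
    · -- the exceptional family : a star with a pendant path of length 2
      push_neg at hB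
      have hB2 : ∀ p q : V, p ≠ u → p ≠ w → q ≠ u → q ≠ w → T.dist p q ≤ 2 := by
        intro p q h1 h2 h3 h4
        have := hB p q h1 h2 h3 h4
        omega
      have hd4 : T.dist r u = 4 := by
        have := hB2 r m hru hrw hmu hmw
        omega
      obtain ⟨q, hmq, hqd⟩ := exists_parent hT r hmr
      have hqu : q ≠ u := by intro h; rw [h] at hqd; omega
      have hqw : q ≠ w := by intro h; rw [h] at hqd; omega
      have hqm : q ≠ m := by intro h; rw [h] at hqd; omega
      have hqr : q ≠ r := by intro h; rw [h] at hqd; omega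
      have hdepth2 : ∀ v, v ≠ u → v ≠ w → T.dist r v ≤ 2 := fun v h1 h2 =>
        hB2 r v hru hrw h1 h2
      have hadjrq : T.Adj r q := by
        have : T.dist r q = 1 := by omega
        exact SimpleGraph.dist_eq_one_iff_adj.mp this
      have hD1 : ∀ v, T.Adj r v → v = q := by
        intro v hv
        have hdv : T.dist r v = 1 := SimpleGraph.dist_eq_one_iff_adj.mpr hv
        by_contra hvq
        have hvu : v ≠ u := by intro h; rw [h] at hdv; omega
        have hvw : v ≠ w := by intro h; rw [h] at hdv; omega
        have hvm : v ≠ m := by intro h; rw [h] at hdv; omega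
        have hnadj : ¬ T.Adj v m := by
          intro h
          exact hvq (parent_unique hT r h.symm (by omega) hmq (by omega))
        have hcom : ∀ z, T.Adj v z → ¬ T.Adj z m := by
          intro z h1 h2
          have hz1 := adj_dist hT r h1
          have hz2 := adj_dist hT r h2
          omega
        have h3 := three_le_dist hT hvm hnadj hcom
        have := hB2 v m hvu hvw hmu hmw
        omega
      have hD2 : ∀ v, T.dist r v = 2 → T.Adj q v := by
        intro v hv
        have hvr : v ≠ r := by intro h; rw [h] at hv; omega
        obtain ⟨p, hp, hpd⟩ := exists_parent hT r hvr
        have hdp : T.dist r p = 1 := by omega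
        have : p = q := hD1 p (SimpleGraph.dist_eq_one_iff_adj.mp hdp)
        rw [← this]
        exact hp.symm
      set S : Set V := {v | T.Adj q v ∧ v ≠ m} with hS
      have hrS : r ∈ S := ⟨hadjrq.symm, fun h => hmr h.symm⟩
      have hdepS : ∀ v ∈ S, T.dist r v = 0 ∨ T.dist r v = 2 := by
        intro v hv
        have := adj_dist hT r hv.1
        omega
      have hwnotS : w ∉ S := by
        intro h
        rcases hdepS w h with h' | h' <;> omega
      have hunotS : u ∉ S := by
        intro h
        rcases hdepS u h with h' | h' <;> omega
      have hqnotS : q ∉ S := fun h => T.irrefl h.1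
      have hmnotS : m ∉ S := fun h => h.2 rfl
      have hSleaf : ∀ v ∈ S, ∀ z, T.Adj v z → z = q := by
        intro v hv z hz
        rcases hdepS v hv with h0 | h2
        · have hvr : v = r := (hT.isConnected.dist_eq_zero_iff.mp h0).symm
          rw [hvr] at hz
          exact hD1 z hz
        · have hdz := adj_dist hT r hz
          rcases eq_or_ne z u with rfl | hzu
          · exfalso
            have := hleaf v hz.symm
            rw [this] at hv
            exact hwnotS hv
          rcases eq_or_ne z w with rfl | hzw
          · exfalso
            rcases hdeg2 v hz.symm with h | h
            · rw [h] at h2; omega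
            · exact hv.2 h
          · have := hdepth2 z hzu hzw
            have hdz1 : T.dist r z = 1 := by omega
            exact hD1 z (SimpleGraph.dist_eq_one_iff_adj.mp hdz1)
      have hpart : ∀ v, v = u ∨ v = w ∨ v = q ∨ v = m ∨ v ∈ S := by
        intro v
        rcases eq_or_ne v u with rfl | hvu
        · exact Or.inl rfl
        rcases eq_or_ne v w with rfl | hvw
        · exact Or.inr (Or.inl rfl)
        have h2 := hdepth2 v hvu hvw
        have : T.dist r v = 0 ∨ T.dist r v = 1 ∨ T.dist r v = 2 := by omega
        rcases this with h | h | h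
        · have : v = r := (hT.isConnected.dist_eq_zero_iff.mp h).symm
          rw [this]
          exact Or.inr (Or.inr (Or.inr (Or.inr hrS)))
        · exact Or.inr (Or.inr (Or.inl (hD1 v (SimpleGraph.dist_eq_one_iff_adj.mp h))))
        · have := hD2 v h
          rcases eq_or_ne v m with rfl | hvm
          · exact Or.inr (Or.inr (Or.inr (Or.inl rfl)))
          · exact Or.inr (Or.inr (Or.inr (Or.inr ⟨this, hvm⟩)))
      -- nonadjacency inventory
      have hnadj_wq : ¬ T.Adj w q := by
        intro hh
        rcases hdeg2 q hh with h | h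
        · exact hqu h
        · exact hqm h
      have hnadj_wS : ∀ v ∈ S, ¬ T.Adj w v := by
        intro v hv hh
        rcases hdeg2 v hh with h | h
        · exact hunotS (h ▸ hv)
        · exact hv.2 h
      have hnadj_uS : ∀ v ∈ S, ¬ T.Adj u v := by
        intro v hv hh
        exact hwnotS ((hleaf v hh) ▸ hv)
      have hnadj_uq : ¬ T.Adj u q := fun hh => hqw (hleaf q hh)
      have hnadj_um : ¬ T.Adj u m := fun hh => hmw (hleaf m hh)
      have hnadj_mu : ¬ T.Adj m u := fun hh => hnadj_um hh.symm
      have hnadj_SS : ∀ v ∈ S, ∀ z ∈ S, ¬ T.Adj v z := by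
        intro v hv z hz hh
        exact hqnotS ((hSleaf v hv z hh) ▸ hz)
      have hnadj_Sm : ∀ v ∈ S, ¬ T.Adj v m := by
        intro v hv hh
        exact hqm (hSleaf v hv m hh).symm
      have hnadj_rm : ¬ T.Adj r m := by
        intro hh
        rcases adj_dist hT r hh with h | h <;> omega
      -- edge classification
      have hedge : ∀ x y, T.Adj x y →
          (x = u ∧ y = w) ∨ (x = w ∧ y = u) ∨ (x = w ∧ y = m) ∨ (x = m ∧ y = w) ∨
          (x = m ∧ y = q) ∨ (x = q ∧ y = m) ∨ (x = q ∧ y ∈ S) ∨ (x ∈ S ∧ y = q) := by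
        intro x y hxy
        rcases hpart x with rfl | rfl | rfl | rfl | hx
        · exact Or.inl ⟨rfl, hleaf y hxy⟩
        · rcases hdeg2 y hxy with h | h
          · exact Or.inr (Or.inl ⟨rfl, h⟩)
          · exact Or.inr (Or.inr (Or.inl ⟨rfl, h⟩))
        · rcases hpart y with rfl | rfl | rfl | rfl | hy
          · exact absurd hxy.symm hnadj_uq
          · exact absurd hxy.symm hnadj_wq
          · exact absurd hxy (T.irrefl)
          · exact Or.inr (Or.inr (Or.inr (Or.inr (Or.inr (Or.inl ⟨rfl, rfl⟩)))))
          · exact Or.inr (Or.inr (Or.inr (Or.inr (Or.inr (Or.inr (Or.inl ⟨rfl, hy⟩))))))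
        · rcases hpart y with rfl | rfl | rfl | rfl | hy
          · exact absurd hxy.symm hnadj_um
          · exact Or.inr (Or.inr (Or.inr (Or.inl ⟨rfl, rfl⟩)))
          · exact Or.inr (Or.inr (Or.inr (Or.inr (Or.inl ⟨rfl, rfl⟩))))
          · exact absurd hxy (T.irrefl)
          · exact absurd hxy.symm (hnadj_Sm y hy)
        · exact Or.inr (Or.inr (Or.inr (Or.inr (Or.inr (Or.inr (Or.inr
            ⟨hx, hSleaf x hx y hxy⟩))))))
      have ht_cases : t = q ∨ t = m ∨ t ∈ S := by
        rcases hpart t with rfl | rfl | rfl | rfl | h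
        · exact absurd rfl htu
        · exact absurd rfl htw
        · exact Or.inl rfl
        · exact Or.inr (Or.inl rfl)
        · exact Or.inr (Or.inr h)
      have hmq' : m ≠ q := fun h => hqm h.symm
      have hrq : r ≠ q := fun h => hqr h.symm
      have hwq : w ≠ q := fun h => hqw h.symm
      have huq : u ≠ q := fun h => hqu h.symm
      have hum : u ≠ m := fun h => hmu h.symm
      have hrm : r ≠ m := fun h => hmr h.symm
      have hwm' : w ≠ m := fun h => hmw h.symm
      have huw' : u ≠ w := fun h => hwu h.symm
      by_cases hS1 : ∃ s', s' ∈ S ∧ s' ≠ t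
      · obtain ⟨s₀, hs₀S, hs₀t⟩ := hS1
        set FS : Finset V := Finset.univ.filter (· ∈ S) with hFS
        have hmemFS : ∀ v, v ∈ FS ↔ v ∈ S := by intro v; simp [hFS]
        obtain ⟨ρ, hρ, hρf, hρs₀⟩ := exists_cycle_through FS m s₀
          (fun h => hmnotS ((hmemFS m).mp h)) ((hmemFS s₀).mpr hs₀S)
        have hYnotq : q ∉ insert m FS := by
          intro h
          rcases Finset.mem_insert.mp h with h' | h'
          · exact hqm h'
          · exact hqnotS ((hmemFS q).mp h')
        have hYnotw : w ∉ insert m FS := by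
          intro h
          rcases Finset.mem_insert.mp h with h' | h'
          · exact hwm' h'
          · exact hwnotS ((hmemFS w).mp h')
        have hYnotu : u ∉ insert m FS := by
          intro h
          rcases Finset.mem_insert.mp h with h' | h'
          · exact hum h'
          · exact hunotS ((hmemFS u).mp h')
        set π : Equiv.Perm V :=
          (Equiv.swap w u).trans ((Equiv.swap q w).trans (Equiv.swap m q)) with hπ
        have hπm : π m = q := by
          simp only [hπ, Equiv.trans_apply]
          rw [Equiv.swap_apply_of_ne_of_ne hmw hmu,
            Equiv.swap_apply_of_ne_of_ne hmq' hmw, Equiv.swap_apply_left]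
        have hπq : π q = w := by
          simp only [hπ, Equiv.trans_apply]
          rw [Equiv.swap_apply_of_ne_of_ne hqw hqu, Equiv.swap_apply_left,
            Equiv.swap_apply_of_ne_of_ne hwm' hwq]
        have hπw : π w = u := by
          simp only [hπ, Equiv.trans_apply]
          rw [Equiv.swap_apply_left, Equiv.swap_apply_of_ne_of_ne huq huw',
            Equiv.swap_apply_of_ne_of_ne hum huq]
        have hπu : π u = m := by
          simp only [hπ, Equiv.trans_apply]
          rw [Equiv.swap_apply_right, Equiv.swap_apply_right, Equiv.swap_apply_right]
        have hπfix : ∀ x, x ≠ m → x ≠ q → x ≠ w → x ≠ u → π x = x := by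
          intro x h1 h2 h3 h4
          simp only [hπ, Equiv.trans_apply]
          rw [Equiv.swap_apply_of_ne_of_ne h3 h4, Equiv.swap_apply_of_ne_of_ne h2 h3,
            Equiv.swap_apply_of_ne_of_ne h1 h2]
        have hSne4 : ∀ v ∈ S, v ≠ m ∧ v ≠ q ∧ v ≠ w ∧ v ≠ u := by
          intro v hv
          exact ⟨fun h => hmnotS (h ▸ hv), fun h => hqnotS (h ▸ hv),
            fun h => hwnotS (h ▸ hv), fun h => hunotS (h ▸ hv)⟩
        set σ : Equiv.Perm V := ρ.trans π with hσ
        have hσq : σ q = w := by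
          simp only [hσ, Equiv.trans_apply]
          rw [hρf q hYnotq, hπq]
        have hσw : σ w = u := by
          simp only [hσ, Equiv.trans_apply]
          rw [hρf w hYnotw, hπw]
        have hσu : σ u = m := by
          simp only [hσ, Equiv.trans_apply]
          rw [hρf u hYnotu, hπu]
        have hσm : σ m ∈ S := by
          simp only [hσ, Equiv.trans_apply]
          have h1 := hρ m (Finset.mem_insert_self _ _)
          have h2 : ρ m ∈ S := by
            rcases Finset.mem_insert.mp h1.1 with h' | h'
            · exact absurd h' h1.2
            · exact (hmemFS _).mp h'
          obtain ⟨a1, a2, a3, a4⟩ := hSne4 _ h2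
          rw [hπfix _ a1 a2 a3 a4]
          exact h2
        have hσs₀ : σ s₀ = q := by
          simp only [hσ, Equiv.trans_apply]
          rw [hρs₀, hπm]
        have hσS : ∀ v ∈ S, v ≠ s₀ → σ v ∈ S ∧ σ v ≠ v := by
          intro v hv hvs₀
          simp only [hσ, Equiv.trans_apply]
          have h1 := hρ v (Finset.mem_insert_of_mem ((hmemFS v).mpr hv))
          have h2 : ρ v ∈ S := by
            rcases Finset.mem_insert.mp h1.1 with h' | h'
            · exfalso
              rw [← hρs₀] at h'
              exact hvs₀ (ρ.injective h')
            · exact (hmemFS _).mp h'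
          obtain ⟨a1, a2, a3, a4⟩ := hSne4 _ h2
          rw [hπfix _ a1 a2 a3 a4]
          exact ⟨h2, h1.2⟩
        refine ⟨σ, ?_, ?_, ?_⟩
        · intro x y hxy
          rcases hedge x y hxy with ⟨rfl, rfl⟩ | ⟨rfl, rfl⟩ | ⟨rfl, rfl⟩ | ⟨rfl, rfl⟩ |
            ⟨rfl, rfl⟩ | ⟨rfl, rfl⟩ | ⟨rfl, hy⟩ | ⟨hx, rfl⟩
          · rw [hσu, hσw]; exact hnadj_mu
          · rw [hσu, hσw]; exact fun hh => hnadj_mu hh.symm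
          · rw [hσw]; exact fun hh => hnadj_uS _ hσm hh
          · rw [hσw]; exact fun hh => hnadj_uS _ hσm hh.symm
          · rw [hσq]; exact fun hh => hnadj_wS _ hσm hh.symm
          · rw [hσq]; exact fun hh => hnadj_wS _ hσm hh
          · rw [hσq]
            rcases eq_or_ne y s₀ with rfl | hys₀
            · rw [hσs₀]; exact hnadj_wq
            · exact hnadj_wS _ (hσS y hy hys₀).1
          · rw [hσq]
            rcases eq_or_ne x s₀ with rfl | hxs₀
            · rw [hσs₀]; exact fun hh => hnadj_wq hh.symm
            · exact fun hh => hnadj_wS _ (hσS x hx hxs₀).1 hh.symm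
        · intro v
          rcases hpart v with rfl | rfl | rfl | rfl | hv
          · rw [hσu]; exact hmu
          · rw [hσw]; exact huw'
          · rw [hσq]; exact hwq
          · exact fun hh => hmnotS (hh ▸ hσm)
          · rcases eq_or_ne v s₀ with rfl | hvs₀
            · rw [hσs₀]; intro hh; exact hqnotS (hh ▸ hv)
            · exact (hσS v hv hvs₀).2
        · rcases ht_cases with rfl | rfl | ht
          · rw [hσq]; exact hnadj_wq
          · exact hnadj_Sm _ hσm
          · have htns₀ : t ≠ s₀ := fun h => hs₀t h.symm
            exact hnadj_SS _ (hσS t ht htns₀).1 _ ht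
      · -- S = {r} and t = r : the path on five vertices
        push_neg at hS1
        have htr : t = r := (hS1 r hrS).symm
        have hSr : ∀ s' ∈ S, s' = r := by
          intro s' hs'
          rw [hS1 s' hs', htr]
        set σ : Equiv.Perm V :=
          (((Equiv.swap w q).trans (Equiv.swap u w)).trans (Equiv.swap m u)).trans
            (Equiv.swap r m) with hσ
        have happ : ∀ x, σ x = Equiv.swap r m (Equiv.swap m u (Equiv.swap u w
            (Equiv.swap w q x))) := fun x => rfl
        have hσr : σ r = m := by
          rw [happ, Equiv.swap_apply_of_ne_of_ne hrw hrq,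
            Equiv.swap_apply_of_ne_of_ne hru hrw,
            Equiv.swap_apply_of_ne_of_ne hrm hru, Equiv.swap_apply_left]
        have hσm : σ m = u := by
          rw [happ, Equiv.swap_apply_of_ne_of_ne hmw hmq',
            Equiv.swap_apply_of_ne_of_ne hmu hmw, Equiv.swap_apply_left,
            Equiv.swap_apply_of_ne_of_ne hur hum]
        have hσu : σ u = w := by
          rw [happ, Equiv.swap_apply_of_ne_of_ne huw' huq, Equiv.swap_apply_left,
            Equiv.swap_apply_of_ne_of_ne hwm' hwu,
            Equiv.swap_apply_of_ne_of_ne hwr hwm']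
        have hσw : σ w = q := by
          rw [happ, Equiv.swap_apply_left, Equiv.swap_apply_of_ne_of_ne hqu hqw,
            Equiv.swap_apply_of_ne_of_ne hqm hqu,
            Equiv.swap_apply_of_ne_of_ne hqr hqm]
        have hσq : σ q = r := by
          rw [happ, Equiv.swap_apply_right, Equiv.swap_apply_right,
            Equiv.swap_apply_right, Equiv.swap_apply_right]
        have hnadj_ur : ¬ T.Adj u r := fun hh => hrw (hleaf r hh)
        refine ⟨σ, ?_, ?_, ?_⟩
        · intro x y hxy
          rcases hedge x y hxy with ⟨rfl, rfl⟩ | ⟨rfl, rfl⟩ | ⟨rfl, rfl⟩ | ⟨rfl, rfl⟩ |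
            ⟨rfl, rfl⟩ | ⟨rfl, rfl⟩ | ⟨rfl, hy⟩ | ⟨hx, rfl⟩
          · rw [hσu, hσw]; exact fun hh => hnadj_wq hh
          · rw [hσu, hσw]; exact fun hh => hnadj_wq hh.symm
          · rw [hσw, hσm]; exact fun hh => hnadj_uq hh.symm
          · rw [hσw, hσm]; exact fun hh => hnadj_uq hh
          · rw [hσm, hσq]; exact fun hh => hnadj_ur hh
          · rw [hσm, hσq]; exact fun hh => hnadj_ur hh.symm
          · rw [hσq, hSr y hy, hσr]; exact hnadj_rm
          · rw [hσq, hSr x hx, hσr]; exact fun hh => hnadj_rm hh.symm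
        · intro v
          rcases hpart v with rfl | rfl | rfl | rfl | hv
          · rw [hσu]; exact fun h => hwu h
          · rw [hσw]; exact fun h => hqw h
          · rw [hσq]; exact hrq
          · rw [hσm]; exact fun h => hum h
          · rw [hSr v hv, hσr]; exact fun h => hrm h.symm
        · rw [htr, hσr]
          exact fun hh => hnadj_rm hh.symm


universe v

lemma key : ∀ (n : ℕ) (V : Type v) [Fintype V] (T : SimpleGraph V),
    Fintype.card V ≤ n → T.IsTree → (∃ x y : V, 3 ≤ T.dist x y) → ∀ t : V,
    ∃ σ : Equiv.Perm V, (∀ a b, T.Adj a b → ¬ T.Adj (σ a) (σ b)) ∧ (∀ a, σ a ≠ a) ∧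
      ¬ T.Adj (σ t) t := by
  intro n
  induction n with
  | zero =>
    intro V _ T hc hT h3 t
    exact ((Fintype.card_eq_zero_iff.mp (Nat.le_zero.mp hc)).false t).elim
  | succ n ihn =>
    intro V _ T hc hT h3 t
    classical
    have ihV : ∀ (W : Type v) [Fintype W] (S : SimpleGraph W),
        Fintype.card W < Fintype.card V → S.IsTree → (∃ x y : W, 3 ≤ S.dist x y) →
        ∀ t' : W, ∃ σ' : Equiv.Perm W, (∀ a b, S.Adj a b → ¬ S.Adj (σ' a) (σ' b)) ∧
          (∀ a, σ' a ≠ a) ∧ ¬ S.Adj (σ' t') t' := by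
      intro W _ S hcard hS h3' t'
      exact ihn W S (by omega) hS h3' t'
    by_cases h4 : ∃ x y : V, 4 ≤ T.dist x y
    · obtain ⟨x0, y0, hxy0⟩ := h4
      obtain ⟨u1, -, hu1⟩ := Finset.exists_max_image Finset.univ (fun z => T.dist x0 z)
        ⟨y0, Finset.mem_univ _⟩
      have hmax1 : ∀ z, T.dist x0 z ≤ T.dist x0 u1 := fun z => hu1 z (Finset.mem_univ z)
      have hd1 : 4 ≤ T.dist x0 u1 := le_trans hxy0 (hmax1 y0)
      have hd00 : T.dist x0 x0 = 0 := SimpleGraph.dist_self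
      have hu1r : u1 ≠ x0 := by intro h; rw [h] at hd1; omega
      obtain ⟨w1, hw1a, hw1d⟩ := exists_parent hT x0 hu1r
      by_cases ht1 : t ≠ u1 ∧ t ≠ w1
      · exact step hT ihV x0 u1 w1 hmax1 hd1 hw1a hw1d t ht1.1 ht1.2
      · obtain ⟨u2, -, hu2⟩ := Finset.exists_max_image Finset.univ (fun z => T.dist u1 z)
          ⟨x0, Finset.mem_univ _⟩
        have hmax2 : ∀ z, T.dist u1 z ≤ T.dist u1 u2 := fun z => hu2 z (Finset.mem_univ z)
        have hd2 : 4 ≤ T.dist u1 u2 := by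
          refine le_trans ?_ (hmax2 x0)
          rw [SimpleGraph.dist_comm]
          exact hd1
        have hd10 : T.dist u1 u1 = 0 := SimpleGraph.dist_self
        have hu2r : u2 ≠ u1 := by intro h; rw [h] at hd2; omega
        obtain ⟨w2, hw2a, hw2d⟩ := exists_parent hT u1 hu2r
        have hw1dist : T.dist u1 w1 = 1 := SimpleGraph.dist_eq_one_iff_adj.mpr hw1a
        have ht' : t = u1 ∨ t = w1 := by
          rcases not_and_or.mp ht1 with h | h
          · exact Or.inl (not_not.mp h)
          · exact Or.inr (not_not.mp h)
        have htu2 : t ≠ u2 := by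
          intro h
          rcases ht' with h' | h'
          · have h2 : u1 = u2 := h'.symm.trans h
            rw [← h2] at hd2
            omega
          · have h2 : w1 = u2 := h'.symm.trans h
            rw [← h2] at hd2
            omega
        have htw2 : t ≠ w2 := by
          intro h
          rcases ht' with h' | h'
          · have h2 : u1 = w2 := h'.symm.trans h
            rw [← h2] at hw2d
            omega
          · have h2 : w1 = w2 := h'.symm.trans h
            rw [← h2] at hw2d
            omega
        exact step hT ihV u1 u2 w2 hmax2 hd2 hw2a hw2d t htu2 htw2
    · push_neg at h4
      obtain ⟨x, y, hxy3⟩ := h3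
      have hle3 : ∀ a b : V, T.dist a b ≤ 3 := by
        intro a b
        have := h4 a b
        omega
      exact doublestar hT hle3 (le_antisymm (hle3 x y) hxy3) t

lemma edgeSet_map_eq {V : Type*} (σ : V ≃ V) (T : SimpleGraph V) :
    (T.map σ.toEmbedding).edgeSet = Sym2.map σ '' T.edgeSet := by
  ext e
  induction e with
  | _ a b =>
    simp only [SimpleGraph.mem_edgeSet, SimpleGraph.map_adj, Set.mem_image,
      Equiv.coe_toEmbedding]
    constructor
    · rintro ⟨-, a', b', h, rfl, rfl⟩
      exact ⟨s(a', b'), h, Sym2.map_pair_eq σ a' b'⟩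
    · rintro ⟨e', he', hme⟩
      induction e' with
      | _ c d =>
        rw [Sym2.map_pair_eq] at hme
        rcases Sym2.eq_iff.mp hme with ⟨h1, h2⟩ | ⟨h1, h2⟩
        · exact ⟨by rw [← h1, ← h2]; exact σ.injective.ne (show T.Adj c d from he').ne,
            c, d, he', h1, h2⟩
        · exact ⟨by rw [← h2, ← h1]; exact σ.injective.ne (show T.Adj c d from he').ne.symm,
            d, c, SimpleGraph.Adj.symm he', h2, h1⟩

end SelfAnti

/-- every finite tree `T` of diameter at least `3` admits a self-isomorphic
graph anti-homomorphism: a bijection `σ : V(T) → V(T)` such that `σ(u)σ(v)` is never an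
edge of `T` for any edge `uv`; consequently the graph with edge set
`E(T) ∪ {σ(u)σ(v) : uv ∈ E(T)}` has exactly `2|E(T)|` edges. -/
theorem tree_self_isomorphic_anti_homomorphism {V : Type*} [Fintype V]
    (T : SimpleGraph V) (hT : T.IsTree) (hdiam : ∃ u v : V, 3 ≤ T.dist u v) :
    ∃ σ : V ≃ V,
      (∀ u v, T.Adj u v → ¬ T.Adj (σ u) (σ v)) ∧
      (T ⊔ T.map σ.toEmbedding).edgeSet.ncard = 2 * T.edgeSet.ncard := by
  classical
  obtain ⟨x0, y0, h3⟩ := hdiam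
  obtain ⟨σ, hpack, hfpf, -⟩ :=
    SelfAnti.key (Fintype.card V) V T le_rfl hT ⟨x0, y0, h3⟩ x0
  refine ⟨σ, hpack, ?_⟩
  have hme := SelfAnti.edgeSet_map_eq σ T
  have hdisj : Disjoint T.edgeSet (T.map σ.toEmbedding).edgeSet := by
    rw [Set.disjoint_left]
    intro e he hmem
    rw [hme] at hmem
    obtain ⟨e', he', hee⟩ := hmem
    induction e' with
    | _ c d =>
      rw [Sym2.map_pair_eq] at hee
      rw [← hee] at he
      exact hpack c d he' he
  rw [SimpleGraph.edgeSet_sup, Set.ncard_union_eq hdisj (Set.toFinite _) (Set.toFinite _),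
    hme, Set.ncard_image_of_injective _ (Sym2.map.injective σ.injective)]
  omega
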